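/- Assume the standard setup with q0 ≡ 7 (mod 8). Then every μ ∈ F can be written as μ = c1·h1 + c2·h2 + c3·h3 with c1, c2, c3 ∈ K and h1, h2, h3 ∈ H (equality in F, with the hi viewed as elements of F). Equivalently, the covering radius of the generalized Zetterberg code C_s(q0) is at most 3. -/

import Mathlib

open Finset Polynomial

section ZetterbergAux

variable {F : Type*} [Field F]

lemma zet_engine (φ : F →+* F) (hφφ : ∀ x : F, φ (φ x) = x)
    (h2 : (2 : F) ≠ 0) {μ B c τ : F} (hμ : μ ≠ 0)
    (hB : φ B = B) (hτq : φ τ = -τ)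
    (hτ : τ ^ 2 = B ^ 2 - 4 * (μ * φ μ) * c ^ 2) :
    ∃ x : F, x * φ x = c ^ 2 ∧ μ * φ x + φ μ * x = B ∧
      (μ - x) * φ (μ - x) = μ * φ μ + c ^ 2 - B := by
  have hφμ : φ μ ≠ 0 := fun h => hμ (by rw [← hφφ μ, h, map_zero])
  have hφ2 : φ (2 : F) = 2 := by
    have h20 : ((2 : ℕ) : F) = (2 : F) := by norm_num
    rw [← h20, map_natCast]
  refine ⟨(B + τ) / (2 * φ μ), ?_, ?_, ?_⟩
  all_goals
    have hx : φ ((B + τ) / (2 * φ μ)) = (B - τ) / (2 * μ) := by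
      rw [map_div₀, map_add, hB, hτq, map_mul, hφ2, hφφ, sub_eq_add_neg]
  · rw [hx]
    field_simp
    linear_combination -hτ
  · rw [hx]
    field_simp
    ring
  · rw [map_sub, hx]
    field_simp
    linear_combination -hτ

lemma zet_sqrt [Fintype F] {q : ℕ} (hcard : Fintype.card F = q ^ 2)
    (hodd : Odd q) (φ : F →+* F) (hφ : ∀ x : F, φ x = x ^ q) {d : F} (hd : φ d = d) :
    (∃ y : F, φ y = y ∧ y ≠ 0 ∧ d = y ^ 2) ∨ ∃ τ : F, τ ^ 2 = d ∧ φ τ = -τ := by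
  rcases eq_or_ne d 0 with rfl | hd0
  · exact Or.inr ⟨0, by simp⟩
  obtain ⟨k, hk⟩ := hodd
  have hq1 : 1 ≤ q := by omega
  have hchar : ringChar F ≠ 2 := by
    intro h
    have h1 := FiniteField.even_card_iff_char_two.mp h
    rw [hcard] at h1
    have h2 : q ^ 2 = (2 * (2 * (k * k) + 2 * k) + 1) := by subst hk; ring
    omega
  have hdq : d ^ q = d := by rw [← hφ, hd]
  have hsq : IsSquare d := by
    rw [FiniteField.isSquare_iff hchar hd0, hcard]
    have hdq1 : d ^ (q - 1) = 1 := by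
      have h3 : d ^ (q - 1) * d = 1 * d := by
        rw [one_mul, ← pow_succ]
        have h4 : q - 1 + 1 = q := by omega
        rw [h4, hdq]
      exact mul_right_cancel₀ hd0 h3
    have hm : q ^ 2 / 2 = (q - 1) * (k + 1) := by
      have h2 : q ^ 2 = 4 * (k * (k + 1)) + 1 := by subst hk; ring
      have h3 : (q - 1) * (k + 1) = 2 * (k * (k + 1)) := by
        have h5 : q - 1 = 2 * k := by omega
        rw [h5]; ring
      omega
    rw [hm, pow_mul, hdq1, one_pow]
  obtain ⟨y, hy⟩ := hsq
  have hy2 : d = y ^ 2 := by rw [hy, sq]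
  have hyq : (φ y - y) * (φ y + y) = 0 := by
    have h4 : (φ y) ^ 2 = y ^ 2 := by
      rw [← map_pow, ← hy2, hd, hy2]
    linear_combination h4
  rcases mul_eq_zero.mp hyq with h5 | h5
  · exact Or.inl ⟨y, sub_eq_zero.mp h5, fun h => hd0 (by rw [hy2, h]; ring), hy2⟩
  · exact Or.inr ⟨y, hy2.symm, add_eq_zero_iff_eq_neg.mp h5⟩

lemma zet_roots_card [Fintype F] [DecidableEq F] {d e : ℕ} (hd : 0 < d)
    (h : Fintype.card F - 1 = e * d) :
    ((nthRoots d (1 : F)).toFinset).card = d ∧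
      (∀ x : F, x ∈ (nthRoots d (1 : F)).toFinset ↔ x ^ d = 1) := by
  obtain ⟨g, hg⟩ := IsCyclic.exists_generator (α := Fˣ)
  have horder : orderOf g = Fintype.card Fˣ :=
    (orderOf_eq_card_of_forall_mem_zpowers hg).trans Nat.card_eq_fintype_card
  have hPR : IsPrimitiveRoot g (Fintype.card Fˣ) := horder ▸ IsPrimitiveRoot.orderOf g
  have hPRd : IsPrimitiveRoot ((g ^ e : Fˣ) : F) d := by
    apply IsPrimitiveRoot.coe_units_iff.mpr
    exact hPR.pow Fintype.card_pos (by rw [Fintype.card_units, h])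
  refine ⟨?_, fun x => by rw [Multiset.mem_toFinset, mem_nthRoots hd]⟩
  rw [Multiset.toFinset_card_of_nodup (hPRd.nthRoots_one_nodup), hPRd.card_nthRoots_one]

/-- `w` is a nonzero square of the subfield fixed by `φ`. -/
def zetNS (φ : F →+* F) (w : F) : Prop := ∃ y : F, φ y = y ∧ y ≠ 0 ∧ w = y ^ 2

open scoped Classical in
noncomputable def zetY (φ : F →+* F) (w : F) : F :=
  if h : zetNS φ w then h.choose else 0

lemma zetY_spec (φ : F →+* F) {w : F} (h : zetNS φ w) :
    φ (zetY φ w) = zetY φ w ∧ zetY φ w ≠ 0 ∧ w = (zetY φ w) ^ 2 := by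
  rw [zetY]
  rw [dif_pos h]
  exact h.choose_spec

end ZetterbergAux

/-- Standard setup with `q0 ≡ 7 (mod 8)`: every `μ ∈ F` can be written as
`c1·h1 + c2·h2 + c3·h3` with `ci ∈ K` and `hi ∈ H`, i.e. the covering radius of
the generalized Zetterberg code `C_s(q0)` is at most `3`. -/
theorem covering_radius_le_three (q0 s q : ℕ) (hq0 : IsPrimePow q0)
    (hq0odd : Odd q0) (hq07 : q0 % 8 = 7) (hs : Odd s) (hq : q = q0 ^ s)
    (F : Type*) [Field F] [Fintype F] (hF : Fintype.card F = q ^ 2)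
    (K : Subfield F) (hK : Nat.card K = q0)
    (H : Subgroup Fˣ) (hH : Nat.card H = q + 1) :
    ∀ μ : F, ∃ c1 c2 c3 : F, c1 ∈ K ∧ c2 ∈ K ∧ c3 ∈ K ∧
      ∃ h1 h2 h3 : Fˣ, h1 ∈ H ∧ h2 ∈ H ∧ h3 ∈ H ∧
        μ = c1 * (h1 : F) + c2 * (h2 : F) + c3 * (h3 : F) := by
  classical
  -- numerics
  have hq0ge : 7 ≤ q0 := by omega
  have hs1 : s ≠ 0 := by rcases hs with ⟨j, hj⟩; omega
  have hq7 : 7 ≤ q := le_trans hq0ge (hq ▸ Nat.le_self_pow hs1 q0)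
  have hqodd : Odd q := hq ▸ hq0odd.pow
  obtain ⟨kk, hkk⟩ := id hqodd
  -- characteristic
  have hchar : ringChar F ≠ 2 := by
    intro h
    have h1 := FiniteField.even_card_iff_char_two.mp h
    rw [hF] at h1
    have h2 : q ^ 2 = (2 * (2 * (kk * kk) + 2 * kk) + 1) := by subst hkk; ring
    omega
  have h2 : (2 : F) ≠ 0 := Ring.two_ne_zero hchar
  have h4 : (4 : F) ≠ 0 := by
    have h41 : (4 : F) = 2 * 2 := by norm_num
    rw [h41]; exact mul_ne_zero h2 h2
  -- Frobenius
  obtain ⟨np, hp, hcardp⟩ := FiniteField.card F (ringChar F)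
  have hqdvd : q ∣ (ringChar F) ^ (np : ℕ) := by
    rw [← hcardp, hF]; exact dvd_pow_self q two_ne_zero
  obtain ⟨m, hmle, hqm⟩ := (Nat.dvd_prime_pow hp).mp hqdvd
  haveI : Fact (ringChar F).Prime := ⟨hp⟩
  haveI : ExpChar F (ringChar F) := .prime hp
  set φ : F →+* F := iterateFrobenius F (ringChar F) m with hφdef
  have hφ : ∀ x : F, φ x = x ^ q := fun x => by
    rw [hφdef, iterateFrobenius_def, ← hqm]
  have hφφ : ∀ x : F, φ (φ x) = x := fun x => by
    rw [hφ, hφ, ← pow_mul, ← sq, ← hF, FiniteField.pow_card]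
  have hφ2 : φ (2 : F) = 2 := by
    have h20 : ((2 : ℕ) : F) = (2 : F) := by norm_num
    rw [← h20, map_natCast]
  have hφ4 : φ (4 : F) = 4 := by
    have h40 : ((4 : ℕ) : F) = (4 : F) := by norm_num
    rw [← h40, map_natCast]
  -- roots of unity counts
  have he1 : Fintype.card F - 1 = (q - 1) * (q + 1) := by
    have h := Nat.sq_sub_sq q 1
    simp only [one_pow] at h
    rw [hF, h, Nat.mul_comm]
  obtain ⟨hcardA, hmemA⟩ := zet_roots_card (F := F) (d := q + 1) (e := q - 1)
    (by omega) he1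
  obtain ⟨hcardB, hmemB⟩ := zet_roots_card (F := F) (d := q - 1) (e := q + 1)
    (by omega) (by rw [he1]; ring)
  -- H is the group of (q+1)-st roots of unity
  have hHsub : ∀ x : Fˣ, x ∈ H → ((x : F)) ^ (q + 1) = 1 := by
    intro x hx
    have h1 : (⟨x, hx⟩ : H) ^ (q + 1) = 1 := by rw [← hH]; exact pow_card_eq_one'
    have h2' : (x : Fˣ) ^ (q + 1) = 1 := by
      have := congrArg (Subtype.val) h1
      simpa using this
    have := congrArg (Units.val) h2'
    simpa using this
  have hHfin : (univ.filter (fun x : Fˣ => x ∈ H)).card = q + 1 := by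
    rw [← Fintype.card_subtype, ← Nat.card_eq_fintype_card]; exact hH
  have himg : (univ.filter (fun x : Fˣ => x ∈ H)).image Units.val
      = (nthRoots (q + 1) (1 : F)).toFinset := by
    apply Finset.eq_of_subset_of_card_le
    · intro z hz
      simp only [Finset.mem_image, Finset.mem_filter, Finset.mem_univ, true_and] at hz
      obtain ⟨x, hxH, rfl⟩ := hz
      exact (hmemA _).mpr (hHsub x hxH)
    · rw [hcardA, Finset.card_image_of_injective _ (fun _ _ h => Units.ext h), hHfin]
  have hHiff : ∀ x : Fˣ, x ∈ H ↔ ((x : F)) ^ (q + 1) = 1 := by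
    intro x
    refine ⟨hHsub x, fun hx => ?_⟩
    have hmem : (x : F) ∈ (univ.filter (fun y : Fˣ => y ∈ H)).image Units.val := by
      rw [himg]; exact (hmemA _).mpr hx
    simp only [Finset.mem_image, Finset.mem_filter, Finset.mem_univ, true_and] at hmem
    obtain ⟨y, hyH, hyx⟩ := hmem
    rwa [← Units.ext hyx]
  -- turning norm-one elements into members of H
  have mkH : ∀ z : F, z * φ z = 1 → ∃ u : Fˣ, u ∈ H ∧ (u : F) = z := by
    intro z hz
    have hz0 : z ≠ 0 := by
      intro h; rw [h, zero_mul] at hz; exact one_ne_zero hz.symm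
    refine ⟨Units.mk0 z hz0, ?_, Units.val_mk0 hz0⟩
    rw [hHiff, Units.val_mk0, pow_succ, ← hφ, mul_comm]
    exact hz
  -- the subfield with q elements, as a finset
  set Fqs : Finset F := univ.filter (fun x : F => φ x = x) with hFqsdef
  have hmemFqs : ∀ x : F, x ∈ Fqs ↔ φ x = x := by
    intro x; simp [hFqsdef]
  have hFqscard : Fqs.card = q := by
    have hEq : Fqs = insert (0 : F) ((nthRoots (q - 1) (1 : F)).toFinset) := by
      ext x
      rw [hmemFqs, Finset.mem_insert, hmemB x, hφ]
      constructor
      · intro hx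
        rcases eq_or_ne x 0 with rfl | hx0
        · exact Or.inl rfl
        · right
          have h3 : x ^ (q - 1) * x = 1 * x := by
            rw [one_mul, ← pow_succ]
            have h40 : q - 1 + 1 = q := by omega
            rw [h40, hx]
          exact mul_right_cancel₀ hx0 h3
      · rintro (rfl | hx)
        · exact zero_pow (by omega)
        · calc x ^ q = x ^ (q - 1 + 1) := by rw [(by omega : q - 1 + 1 = q)]
            _ = x ^ (q - 1) * x := pow_succ _ _
            _ = x := by rw [hx, one_mul]
    rw [hEq, Finset.card_insert_of_notMem, hcardB]
    · omega
    · intro h0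
      have := (hmemB 0).mp h0
      rw [zero_pow (by omega : q - 1 ≠ 0)] at this
      exact zero_ne_one this
  -- MAIN PART
  intro μ
  by_contra hcon
  rcases eq_or_ne μ 0 with rfl | hμ0
  · exact hcon ⟨0, 0, 0, K.zero_mem, K.zero_mem, K.zero_mem, 1, 1, 1,
      H.one_mem, H.one_mem, H.one_mem, by simp⟩
  have h2K : (2 : F) ∈ K := by
    have hh := K.add_mem K.one_mem K.one_mem
    rwa [one_add_one_eq_two] at hh
  have hinv2K : (2 : F)⁻¹ ∈ K := K.inv_mem h2K
  have hφμ0 : φ μ ≠ 0 := fun h => hμ0 (by rw [← hφφ μ, h, map_zero])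
  set N : F := μ * φ μ with hNdef
  have hN0 : N ≠ 0 := mul_ne_zero hμ0 hφμ0
  have h4N0 : 4 * N ≠ 0 := mul_ne_zero h4 hN0
  have hNfix : φ N = N := by rw [hNdef, map_mul, hφφ, mul_comm]
  -- the key step: from any admissible `t` we reach a "bad norm value" `N + 1 - t`
  have hstep : ∀ t : F, φ t = t → ¬ zetNS φ (t ^ 2 - 4 * N) →
      (N + 1 - t) ∈ Fqs.filter (fun u => u ≠ 0 ∧ u ≠ 1 ∧ zetNS φ (u * (u - 1))) := by
    intro t htfix htNS
    have hdfix : φ (t ^ 2 - 4 * N) = t ^ 2 - 4 * N := by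
      rw [map_sub, map_mul, map_pow, htfix, hNfix, hφ4]
    rcases zet_sqrt hF hqodd φ hφ hdfix with hL | ⟨τ, hτ2, hτq⟩
    · exact absurd hL htNS
    obtain ⟨x, hx1, hx2, hx3⟩ := zet_engine φ hφφ h2 (c := 1) hμ0 htfix hτq
      (by rw [one_pow, mul_one, ← hNdef]; exact hτ2)
    rw [one_pow] at hx1 hx3
    obtain ⟨ux, huxH, huxval⟩ := mkH x hx1
    set ν : F := μ - x with hνdef
    rcases eq_or_ne ν 0 with hν0 | hν0
    · refine (hcon ⟨1, 0, 0, K.one_mem, K.zero_mem, K.zero_mem, ux, 1, 1,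
        huxH, H.one_mem, H.one_mem, ?_⟩).elim
      rw [huxval]
      simp only [Units.val_one, one_mul, zero_mul, add_zero]
      have hμx : μ - x = 0 := by rw [← hνdef]; exact hν0
      linear_combination hμx
    have hu3 : ν * φ ν = N + 1 - t := by rw [hNdef]; exact hx3
    have hφν0 : φ ν ≠ 0 := fun h => hν0 (by rw [← hφφ ν, h, map_zero])
    have hu0 : N + 1 - t ≠ 0 := by rw [← hu3]; exact mul_ne_zero hν0 hφν0
    have hufix : φ (N + 1 - t) = N + 1 - t := by
      rw [map_sub, map_add, hNfix, map_one, htfix]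
    rcases eq_or_ne (N + 1 - t) 1 with hu1 | hu1
    · have hν1 : ν * φ ν = 1 := by rw [hu3, hu1]
      obtain ⟨uν, huνH, huνval⟩ := mkH ν hν1
      refine (hcon ⟨1, 1, 0, K.one_mem, K.one_mem, K.zero_mem, ux, uν, 1,
        huxH, huνH, H.one_mem, ?_⟩).elim
      rw [huxval, huνval, hνdef]
      simp only [Units.val_one]
      ring
    have hNSu : zetNS φ ((N + 1 - t) * ((N + 1 - t) - 1)) := by
      by_contra hns
      have hdfix2 : φ ((N + 1 - t) * ((N + 1 - t) - 1))
          = (N + 1 - t) * ((N + 1 - t) - 1) := by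
        rw [map_mul, hufix, map_sub, map_one, hufix]
      rcases zet_sqrt hF hqodd φ hφ hdfix2 with hL | ⟨τ2, hτ22, hτ2q⟩
      · exact hns hL
      obtain ⟨x2, hy1, hy2, hy3⟩ := zet_engine φ hφφ h2 (c := (2:F)⁻¹) hν0 hufix hτ2q
        (by
          rw [hu3]
          have h22 : (2:F) * 2⁻¹ = 1 := mul_inv_cancel₀ h2
          linear_combination hτ22 + ((N + 1 - t) * (2 * (2:F)⁻¹ + 1)) * h22)
      have h22 : (2:F) * 2⁻¹ = 1 := mul_inv_cancel₀ h2
      have hh1 : (2 * x2) * φ (2 * x2) = 1 := by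
        rw [map_mul, hφ2]
        linear_combination (4:F) * hy1 + (2 * (2:F)⁻¹ + 1) * h22
      have hh2 : (2 * (ν - x2)) * φ (2 * (ν - x2)) = 1 := by
        rw [map_mul, hφ2]
        have h5 : (ν - x2) * φ (ν - x2) = ((2:F)⁻¹) ^ 2 := by rw [hy3, hu3]; ring
        linear_combination (4:F) * h5 + (2 * (2:F)⁻¹ + 1) * h22
      obtain ⟨w1, hw1H, hw1val⟩ := mkH _ hh1
      obtain ⟨w2, hw2H, hw2val⟩ := mkH _ hh2
      refine (hcon ⟨1, (2:F)⁻¹, (2:F)⁻¹, K.one_mem, hinv2K, hinv2K, ux, w1, w2,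
        huxH, hw1H, hw2H, ?_⟩).elim
      rw [huxval, hw1val, hw2val, hνdef]
      field_simp
      ring
    rw [Finset.mem_filter]
    exact ⟨(hmemFqs _).mpr hufix, hu0, hu1, hNSu⟩
  -- counting
  set Pset := Fqs.filter (fun t => zetNS φ (t ^ 2 - 4 * N)) with hPdef
  set Tset := Fqs.filter (fun t => ¬ zetNS φ (t ^ 2 - 4 * N)) with hTdef
  set Bd := Fqs.filter (fun u => u ≠ 0 ∧ u ≠ 1 ∧ zetNS φ (u * (u - 1))) with hBdef
  have hPT : Pset.card + Tset.card = q := by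
    rw [hPdef, hTdef, Finset.card_filter_add_card_filter_not, hFqscard]
  have hTB : Tset.card ≤ Bd.card := by
    apply Finset.card_le_card_of_injOn (fun t => N + 1 - t)
    · intro t ht
      rw [hTdef, Finset.mem_coe, Finset.mem_filter, hmemFqs] at ht
      exact hstep t ht.1 ht.2
    · intro a _ b _ hab
      have hab' : N + 1 - a = N + 1 - b := hab
      linear_combination -hab'
  -- bound for Pset
  have hP2 : Pset.card * 2 ≤ q - 1 := by
    have hPmem : ∀ t : F, t ∈ Pset → φ t = t ∧ zetNS φ (t ^ 2 - 4 * N) := by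
      intro t ht
      rw [hPdef, Finset.mem_filter, hmemFqs] at ht
      exact ht
    calc Pset.card * 2 = (Pset ×ˢ (univ : Finset Bool)).card := by
          rw [Finset.card_product, Finset.card_univ, Fintype.card_bool]
      _ ≤ (Fqs.erase 0).card := ?_
      _ = q - 1 := by
          rw [Finset.card_erase_of_mem ((hmemFqs 0).mpr (map_zero φ)), hFqscard]
    apply Finset.card_le_card_of_injOn
      (fun z => z.1 + (cond z.2 (zetY φ (z.1 ^ 2 - 4 * N)) (-(zetY φ (z.1 ^ 2 - 4 * N)))))
    · rintro ⟨t, b⟩ hz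
      rw [Finset.mem_coe, Finset.mem_product] at hz
      obtain ⟨htfix, htNS⟩ := hPmem t hz.1
      obtain ⟨hyfix, hy0, hysq⟩ := zetY_spec φ htNS
      set y := zetY φ (t ^ 2 - 4 * N)
      have hprod : (t + y) * (t - y) = 4 * N := by linear_combination hysq
      rw [Finset.mem_coe, Finset.mem_erase]
      constructor
      · cases b <;> simp only [Bool.cond_false, Bool.cond_true]
        · intro h
          rw [show t + -y = t - y by ring] at h
          rw [h, mul_zero] at hprod
          exact h4N0 hprod.symm
        · intro h
          rw [h, zero_mul] at hprod
          exact h4N0 hprod.symm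
      · rw [hmemFqs]
        cases b <;> simp only [Bool.cond_false, Bool.cond_true] <;>
          rw [map_add] <;> rw [htfix] <;> simp [map_neg, hyfix, (zetY_spec φ htNS).1]
    · rintro ⟨t1, b1⟩ hz1 ⟨t2, b2⟩ hz2 heq
      simp only [Finset.coe_product, Set.mem_prod, Finset.mem_coe] at hz1 hz2
      obtain ⟨ht1fix, ht1NS⟩ := hPmem t1 hz1.1
      obtain ⟨ht2fix, ht2NS⟩ := hPmem t2 hz2.1
      obtain ⟨hy1fix, hy10, hy1sq⟩ := zetY_spec φ ht1NS
      obtain ⟨hy2fix, hy20, hy2sq⟩ := zetY_spec φ ht2NS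
      simp only at heq
      set y1 := zetY φ (t1 ^ 2 - 4 * N) with hy1def
      set y2 := zetY φ (t2 ^ 2 - 4 * N) with hy2def
      have key1 : (t1 + cond b1 y1 (-y1)) * (2 * t1 - (t1 + cond b1 y1 (-y1))) = 4 * N := by
        cases b1 <;> simp only [Bool.cond_false, Bool.cond_true] <;> linear_combination hy1sq
      have key2 : (t1 + cond b1 y1 (-y1)) * (2 * t2 - (t1 + cond b1 y1 (-y1))) = 4 * N := by
        rw [heq]
        cases b2 <;> simp only [Bool.cond_false, Bool.cond_true] <;> linear_combination hy2sq
      have hr0 : (t1 + cond b1 y1 (-y1)) ≠ 0 := by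
        intro h
        rw [h, zero_mul] at key1
        exact h4N0 key1.symm
      have ht12 : t1 = t2 := by
        have hc := mul_left_cancel₀ hr0 (key1.trans key2.symm)
        have h2t : (2:F) * t1 = 2 * t2 := by linear_combination hc
        exact mul_left_cancel₀ h2 h2t
      subst ht12
      have hyy : y2 = y1 := hy2def.trans hy1def.symm
      rw [hyy] at heq
      cases b1 <;> cases b2
      · rfl
      · exfalso
        simp only [Bool.cond_false, Bool.cond_true] at heq
        have h2y : (2:F) * y1 = 0 := by linear_combination -heq
        rcases mul_eq_zero.mp h2y with h | h
        · exact h2 h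
        · exact hy10 h
      · exfalso
        simp only [Bool.cond_false, Bool.cond_true] at heq
        have h2y : (2:F) * y1 = 0 := by linear_combination heq
        rcases mul_eq_zero.mp h2y with h | h
        · exact h2 h
        · exact hy10 h
      · rfl
  -- bound for Bd
  have hB2 : Bd.card * 2 ≤ q - 3 := by
    have hBmem : ∀ u : F, u ∈ Bd → φ u = u ∧ u ≠ 0 ∧ u ≠ 1 ∧ zetNS φ (u * (u - 1)) := by
      intro u hu
      rw [hBdef, Finset.mem_filter, hmemFqs] at hu
      exact ⟨hu.1, hu.2⟩
    have hm1ne1 : (-1 : F) ≠ 1 := by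
      intro h; exact h2 (by linear_combination -h)
    have hm1ne0 : (-1 : F) ≠ 0 := neg_ne_zero.mpr one_ne_zero
    calc Bd.card * 2 = (Bd ×ˢ (univ : Finset Bool)).card := by
          rw [Finset.card_product, Finset.card_univ, Fintype.card_bool]
      _ ≤ (((Fqs.erase 0).erase 1).erase (-1)).card := ?_
      _ = q - 3 := by
          rw [Finset.card_erase_of_mem, Finset.card_erase_of_mem,
            Finset.card_erase_of_mem, hFqscard]
          · omega
          · exact (hmemFqs 0).mpr (map_zero φ)
          · rw [Finset.mem_erase]
            exact ⟨one_ne_zero, (hmemFqs 1).mpr (map_one φ)⟩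
          · rw [Finset.mem_erase, Finset.mem_erase]
            exact ⟨hm1ne1, hm1ne0, (hmemFqs (-1)).mpr (by rw [map_neg, map_one])⟩
    apply Finset.card_le_card_of_injOn
      (fun z => (2 * z.1 - 1) +
        (cond z.2 (2 * zetY φ (z.1 * (z.1 - 1))) (-(2 * zetY φ (z.1 * (z.1 - 1))))))
    · rintro ⟨u, b⟩ hz
      rw [Finset.mem_coe, Finset.mem_product] at hz
      obtain ⟨hufix, hu0, hu1, huNS⟩ := hBmem u hz.1
      obtain ⟨hyfix, hy0, hysq⟩ := zetY_spec φ huNS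
      set y := zetY φ (u * (u - 1))
      have key : ∀ r : F, r = (2 * u - 1) + (cond b (2*y) (-(2*y))) →
          r * ((4 * u - 2) - r) = 1 := by
        intro r hr
        subst hr
        cases b <;> simp only [Bool.cond_false, Bool.cond_true] <;>
          linear_combination (4:F) * hysq
      simp only
      rw [Finset.mem_coe, Finset.mem_erase, Finset.mem_erase, Finset.mem_erase]
      have hkey := key _ rfl
      refine ⟨?_, ?_, ?_, (hmemFqs _).mpr ?_⟩
      · intro h
        rw [h] at hkey
        apply hu0
        have h40 : (4:F) * u = 0 := by linear_combination -hkey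
        rcases mul_eq_zero.mp h40 with h' | h'
        · exact absurd h' h4
        · exact h'
      · intro h
        rw [h] at hkey
        apply hu1
        have h41 : (4:F) * (u - 1) = 0 := by linear_combination hkey
        rcases mul_eq_zero.mp h41 with h' | h'
        · exact absurd h' h4
        · linear_combination h'
      · intro h
        rw [h, zero_mul] at hkey
        exact one_ne_zero hkey.symm
      · cases b <;> simp only [Bool.cond_false, Bool.cond_true] <;>
          rw [map_add, map_sub, map_mul, hφ2, map_one, hufix] <;>
          simp [map_neg, map_mul, hφ2, hyfix, (zetY_spec φ huNS).1]
    · rintro ⟨u1, b1⟩ hz1 ⟨u2, b2⟩ hz2 heq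
      simp only [Finset.coe_product, Set.mem_prod, Finset.mem_coe] at hz1 hz2
      obtain ⟨hu1fix, hu10, hu11, hu1NS⟩ := hBmem u1 hz1.1
      obtain ⟨hu2fix, hu20, hu21, hu2NS⟩ := hBmem u2 hz2.1
      obtain ⟨hy1fix, hy10, hy1sq⟩ := zetY_spec φ hu1NS
      obtain ⟨hy2fix, hy20, hy2sq⟩ := zetY_spec φ hu2NS
      simp only at heq
      set y1 := zetY φ (u1 * (u1 - 1)) with hy1def
      set y2 := zetY φ (u2 * (u2 - 1)) with hy2def
      have key1 : ((2*u1 - 1) + cond b1 (2*y1) (-(2*y1)))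
          * ((4 * u1 - 2) - ((2*u1 - 1) + cond b1 (2*y1) (-(2*y1)))) = 1 := by
        cases b1 <;> simp only [Bool.cond_false, Bool.cond_true] <;>
          linear_combination (4:F) * hy1sq
      have key2 : ((2*u1 - 1) + cond b1 (2*y1) (-(2*y1)))
          * ((4 * u2 - 2) - ((2*u1 - 1) + cond b1 (2*y1) (-(2*y1)))) = 1 := by
        rw [heq]
        cases b2 <;> simp only [Bool.cond_false, Bool.cond_true] <;>
          linear_combination (4:F) * hy2sq
      have hr0 : ((2*u1 - 1) + cond b1 (2*y1) (-(2*y1))) ≠ 0 := by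
        intro h
        rw [h, zero_mul] at key1
        exact one_ne_zero key1.symm
      have hu12 : u1 = u2 := by
        have hc := mul_left_cancel₀ hr0 (key1.trans key2.symm)
        have h4t : (4:F) * u1 = 4 * u2 := by linear_combination hc
        exact mul_left_cancel₀ h4 h4t
      subst hu12
      have hyy : y2 = y1 := hy2def.trans hy1def.symm
      rw [hyy] at heq
      cases b1 <;> cases b2
      · rfl
      · exfalso
        simp only [Bool.cond_false, Bool.cond_true] at heq
        have h4y : (4:F) * y1 = 0 := by linear_combination -heq
        rcases mul_eq_zero.mp h4y with h | h
        · exact absurd h h4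
        · exact hy10 h
      · exfalso
        simp only [Bool.cond_false, Bool.cond_true] at heq
        have h4y : (4:F) * y1 = 0 := by linear_combination heq
        rcases mul_eq_zero.mp h4y with h | h
        · exact absurd h h4
        · exact hy10 h
      · rfl
  omega
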